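/- Let N_p ∈ ℕ, let ω_s > 0 for s = 1,…,N_p, let B₀ : ℝ³ → ℝ³ be continuous, let g : (ℝ³)^{N_p} → ℝ be twice continuously differentiable, and let Δt ∈ ℝ. Define the kick map ψ : (ℝ³)^{N_p} × (ℝ³)^{N_p} → (ℝ³)^{N_p} × (ℝ³)^{N_p} by ψ(X,V) = (X, V') with V'_s = V_s − Δt (1/ω_s) ∂g/∂X_s(X) for each s. Then ψ preserves the discrete particle bracket: for all continuously differentiable F, G : (ℝ³)^{N_p} × (ℝ³)^{N_p} → ℝ and all (X,V), {F∘ψ, G∘ψ}(X,V) = {F,G}(ψ(X,V)). -/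

import Mathlib

open Matrix
open scoped Matrix BigOperators

noncomputable section

/-- Phase space of `Np` particles in 3D: positions and velocities. -/
abbrev Phase (Np : ℕ) := (Fin Np → Fin 3 → ℝ) × (Fin Np → Fin 3 → ℝ)

/-- Gradient of `F` with respect to the position `X s` of the `s`-th particle. -/
def gradX {Np : ℕ} (F : Phase Np → ℝ) (Z : Phase Np) (s : Fin Np) : Fin 3 → ℝ :=
  fun i => fderiv ℝ F Z (Pi.single s (Pi.single i 1), 0)

/-- Gradient of `F` with respect to the velocity `V s` of the `s`-th particle. -/
def gradV {Np : ℕ} (F : Phase Np → ℝ) (Z : Phase Np) (s : Fin Np) : Fin 3 → ℝ :=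
  fun i => fderiv ℝ F Z (0, Pi.single s (Pi.single i 1))

/-- The discrete particle bracket with weights `ω` and magnetic field `B0`. -/
def pBracket {Np : ℕ} (ω : Fin Np → ℝ) (B0 : (Fin 3 → ℝ) → Fin 3 → ℝ)
    (F G : Phase Np → ℝ) (Z : Phase Np) : ℝ :=
  (∑ s, (1 / ω s) * (gradX F Z s ⬝ᵥ gradV G Z s - gradX G Z s ⬝ᵥ gradV F Z s)) +
    ∑ s, (1 / ω s) * (B0 (Z.1 s) ⬝ᵥ (gradV F Z s ⨯₃ gradV G Z s))

/-- Gradient of a function of all particle positions with respect to the position `X s`. -/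
def gradXs {Np : ℕ} (g : (Fin Np → Fin 3 → ℝ) → ℝ) (X : Fin Np → Fin 3 → ℝ)
    (s : Fin Np) : Fin 3 → ℝ :=
  fun i => fderiv ℝ g X (Pi.single s (Pi.single i 1))

namespace KickAux

variable {Np : ℕ}

lemma vec_decomp (u : Fin Np → Fin 3 → ℝ) :
    u = ∑ t, ∑ j, u t j • (Pi.single t (Pi.single j (1:ℝ)) : Fin Np → Fin 3 → ℝ) := by
  funext a b
  simp only [Finset.sum_apply, Pi.smul_apply, smul_eq_mul, Pi.single_apply,
    apply_ite (fun f : Fin 3 → ℝ => f b), Pi.zero_apply, mul_ite, mul_one, mul_zero]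
  simp [Finset.sum_ite_eq, Finset.sum_ite_eq']

noncomputable def T (ω : Fin Np → ℝ) (Δt : ℝ) :
    ((Fin Np → Fin 3 → ℝ) →L[ℝ] ℝ) →L[ℝ] (Fin Np → Fin 3 → ℝ) :=
  ContinuousLinearMap.pi fun t => ContinuousLinearMap.pi fun j =>
    (Δt * (1 / ω t)) • (ContinuousLinearMap.apply ℝ ℝ (Pi.single t (Pi.single j 1)))

lemma T_apply (ω : Fin Np → ℝ) (Δt : ℝ) (L : (Fin Np → Fin 3 → ℝ) →L[ℝ] ℝ) (t j) :
    T ω Δt L t j = (Δt * (1 / ω t)) * L (Pi.single t (Pi.single j 1)) := rfl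

end KickAux

namespace KickAux

variable {Np : ℕ}

lemma apply_snd (Φ : Phase Np →L[ℝ] ℝ) (u : Fin Np → Fin 3 → ℝ) :
    Φ (0, u) = ∑ t, ∑ j, u t j * Φ (0, Pi.single t (Pi.single j 1)) := by
  have h : ((0, u) : Phase Np)
      = ∑ t, ∑ j, u t j • ((0, Pi.single t (Pi.single j 1)) : Phase Np) := by
    refine Prod.ext ?_ ?_
    · simp [Prod.fst_sum]
    · rw [Prod.snd_sum]
      simp only [Prod.snd_sum, Prod.smul_snd]
      exact vec_decomp u
  rw [h, map_sum]
  refine Finset.sum_congr rfl fun t _ => ?_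
  rw [map_sum]
  refine Finset.sum_congr rfl fun j _ => ?_
  rw [Φ.map_smul, smul_eq_mul]

lemma hasFDerivAt_kick (ω : Fin Np → ℝ) (Δt : ℝ) (g : (Fin Np → Fin 3 → ℝ) → ℝ)
    (hg : ContDiff ℝ 2 g) (Z : Phase Np) :
    HasFDerivAt
      (fun Z : Phase Np =>
        ((Z.1, fun s => Z.2 s - (Δt * (1 / ω s)) • gradXs g Z.1 s) : Phase Np))
      ((ContinuousLinearMap.fst ℝ _ _).prod
        ((ContinuousLinearMap.snd ℝ _ _) -
          ((T ω Δt).comp (fderiv ℝ (fderiv ℝ g) Z.1)).comp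
            (ContinuousLinearMap.fst ℝ _ _))) Z := by
  have hdg : ContDiff ℝ 1 (fderiv ℝ g) := hg.fderiv_right (by norm_num)
  have hφ : HasFDerivAt (fun X => T ω Δt (fderiv ℝ g X))
      ((T ω Δt).comp (fderiv ℝ (fderiv ℝ g) Z.1)) Z.1 :=
    ((T ω Δt).hasFDerivAt).comp Z.1 ((hdg.differentiable one_ne_zero Z.1).hasFDerivAt)
  have heq : (fun Z : Phase Np =>
        ((Z.1, fun s => Z.2 s - (Δt * (1 / ω s)) • gradXs g Z.1 s) : Phase Np))
      = fun Z : Phase Np => (Z.1, Z.2 - T ω Δt (fderiv ℝ g Z.1)) := by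
    funext W
    refine Prod.ext rfl ?_
    funext t j
    simp [T_apply, gradXs]
  rw [heq]
  exact HasFDerivAt.prodMk hasFDerivAt_fst (HasFDerivAt.sub hasFDerivAt_snd (hφ.comp Z hasFDerivAt_fst))

lemma grad_comp (ω : Fin Np → ℝ) (Δt : ℝ) (g : (Fin Np → Fin 3 → ℝ) → ℝ)
    (hg : ContDiff ℝ 2 g) {F : Phase Np → ℝ} (hF : ContDiff ℝ 1 F) (Z : Phase Np) :
    (∀ s, gradV (F ∘ fun Z : Phase Np =>
        ((Z.1, fun s => Z.2 s - (Δt * (1 / ω s)) • gradXs g Z.1 s) : Phase Np)) Z s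
      = gradV F (Z.1, fun s => Z.2 s - (Δt * (1 / ω s)) • gradXs g Z.1 s) s) ∧
    (∀ s i, gradX (F ∘ fun Z : Phase Np =>
        ((Z.1, fun s => Z.2 s - (Δt * (1 / ω s)) • gradXs g Z.1 s) : Phase Np)) Z s i
      = gradX F (Z.1, fun s => Z.2 s - (Δt * (1 / ω s)) • gradXs g Z.1 s) s i -
        ∑ t, ∑ j, (Δt * (1 / ω t)) *
          fderiv ℝ (fderiv ℝ g) Z.1 (Pi.single s (Pi.single i 1))
            (Pi.single t (Pi.single j 1)) *
          gradV F (Z.1, fun s => Z.2 s - (Δt * (1 / ω s)) • gradXs g Z.1 s) t j) := by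
  set ψ : Phase Np → Phase Np := fun Z =>
    ((Z.1, fun s => Z.2 s - (Δt * (1 / ω s)) • gradXs g Z.1 s) : Phase Np) with hψdef
  set L := ((ContinuousLinearMap.fst ℝ (Fin Np → Fin 3 → ℝ) (Fin Np → Fin 3 → ℝ)).prod
        ((ContinuousLinearMap.snd ℝ (Fin Np → Fin 3 → ℝ) (Fin Np → Fin 3 → ℝ)) -
          ((T ω Δt).comp (fderiv ℝ (fderiv ℝ g) Z.1)).comp
            (ContinuousLinearMap.fst ℝ (Fin Np → Fin 3 → ℝ) (Fin Np → Fin 3 → ℝ)))) with hL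
  have hcomp : HasFDerivAt (F ∘ ψ) ((fderiv ℝ F (ψ Z)).comp L) Z :=
    ((hF.differentiable one_ne_zero (ψ Z)).hasFDerivAt).comp Z (hasFDerivAt_kick ω Δt g hg Z)
  have hfd : fderiv ℝ (F ∘ ψ) Z = (fderiv ℝ F (ψ Z)).comp L := hcomp.fderiv
  constructor
  · intro s
    funext i
    rw [gradV, gradV, hfd]
    have h0 : L ((0 : Fin Np → Fin 3 → ℝ), Pi.single s (Pi.single i 1))
        = ((0 : Fin Np → Fin 3 → ℝ), Pi.single s (Pi.single i 1)) := by
      simp [hL]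
    rw [ContinuousLinearMap.comp_apply, h0]
  · intro s i
    rw [gradX, hfd]
    have hLe : L ((Pi.single s (Pi.single i 1) : Fin Np → Fin 3 → ℝ), 0)
        = ((Pi.single s (Pi.single i 1) : Fin Np → Fin 3 → ℝ),
           -(T ω Δt (fderiv ℝ (fderiv ℝ g) Z.1 (Pi.single s (Pi.single i 1))))) := by
      simp [hL, ContinuousLinearMap.comp_apply, ContinuousLinearMap.prod_apply, sub_eq_add_neg]
    rw [ContinuousLinearMap.comp_apply, hLe]
    have hsplit : ((Pi.single s (Pi.single i 1) : Fin Np → Fin 3 → ℝ),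
           -(T ω Δt (fderiv ℝ (fderiv ℝ g) Z.1 (Pi.single s (Pi.single i 1)))))
        = ((Pi.single s (Pi.single i 1) : Fin Np → Fin 3 → ℝ), 0)
          + (0, -(T ω Δt (fderiv ℝ (fderiv ℝ g) Z.1 (Pi.single s (Pi.single i 1))))) := by
      simp
    rw [hsplit, map_add]
    have : (fderiv ℝ F (ψ Z))
        ((0 : Fin Np → Fin 3 → ℝ),
          -(T ω Δt (fderiv ℝ (fderiv ℝ g) Z.1 (Pi.single s (Pi.single i 1)))))
        = - ∑ t, ∑ j, (Δt * (1 / ω t)) *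
          fderiv ℝ (fderiv ℝ g) Z.1 (Pi.single s (Pi.single i 1))
            (Pi.single t (Pi.single j 1)) * gradV F (ψ Z) t j := by
      have hneg : ((0 : Fin Np → Fin 3 → ℝ),
          -(T ω Δt (fderiv ℝ (fderiv ℝ g) Z.1 (Pi.single s (Pi.single i 1)))))
        = -((0 : Fin Np → Fin 3 → ℝ),
            T ω Δt (fderiv ℝ (fderiv ℝ g) Z.1 (Pi.single s (Pi.single i 1)))) := by
        simp
      rw [hneg, map_neg, apply_snd]
      congr 1
    rw [this, gradX, sub_eq_add_neg]

lemma symH (g : (Fin Np → Fin 3 → ℝ) → ℝ) (hg : ContDiff ℝ 2 g) (X : Fin Np → Fin 3 → ℝ)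
    (v w : Fin Np → Fin 3 → ℝ) :
    fderiv ℝ (fderiv ℝ g) X v w = fderiv ℝ (fderiv ℝ g) X w v :=
  second_derivative_symmetric (fun y => (hg.differentiable two_ne_zero y).hasFDerivAt)
    (((hg.fderiv_right (m := 1) (by norm_num)).differentiable one_ne_zero X).hasFDerivAt) v w

lemma key (ω : Fin Np → ℝ) (Δt : ℝ) (H : Fin Np → Fin 3 → Fin Np → Fin 3 → ℝ)
    (hH : ∀ s i t j, H s i t j = H t j s i) (v w : Fin Np → Fin 3 → ℝ) :
    (∑ s, (1 / ω s) * ∑ i, (∑ t, ∑ j, Δt * (1 / ω t) * H s i t j * v t j) * w s i)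
    = ∑ s, (1 / ω s) * ∑ i, (∑ t, ∑ j, Δt * (1 / ω t) * H s i t j * w t j) * v s i := by
  have pack : ∀ f : Fin Np → Fin 3 → Fin Np → Fin 3 → ℝ,
      (∑ s, ∑ i, ∑ t, ∑ j, f s i t j)
      = ∑ p : (Fin Np × Fin 3) × (Fin Np × Fin 3), f p.1.1 p.1.2 p.2.1 p.2.2 := by
    intro f; simp [Fintype.sum_prod_type]
  have expand : ∀ a b : Fin Np → Fin 3 → ℝ,
      (∑ s, (1 / ω s) * ∑ i, (∑ t, ∑ j, Δt * (1 / ω t) * H s i t j * a t j) * b s i)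
      = ∑ s, ∑ i, ∑ t, ∑ j, (1 / ω s) * (Δt * (1 / ω t) * H s i t j * a t j * b s i) := by
    intro a b
    simp only [Finset.mul_sum, Finset.sum_mul]
  rw [expand, expand, pack, pack]
  refine Fintype.sum_equiv (Equiv.prodComm _ _) _ _ fun p => ?_
  simp only [Equiv.prodComm_apply, Prod.swap]
  rw [hH p.2.1 p.2.2 p.1.1 p.1.2]
  ring

end KickAux

/-- The kick map leaving positions fixed preserves the discrete particle bracket. -/
theorem kick_map_preserves_bracket {Np : ℕ}
    (ω : Fin Np → ℝ) (hω : ∀ s, 0 < ω s)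
    (B0 : (Fin 3 → ℝ) → Fin 3 → ℝ) (hB : Continuous B0)
    (g : (Fin Np → Fin 3 → ℝ) → ℝ) (hg : ContDiff ℝ 2 g) (Δt : ℝ)
    (ψ : Phase Np → Phase Np)
    (hψ : ψ = fun Z => (Z.1, fun s => Z.2 s - (Δt * (1 / ω s)) • gradXs g Z.1 s))
    (F G : Phase Np → ℝ) (hF : ContDiff ℝ 1 F) (hG : ContDiff ℝ 1 G) (Z : Phase Np) :
    pBracket ω B0 (F ∘ ψ) (G ∘ ψ) Z = pBracket ω B0 F G (ψ Z) := by
  subst hψ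
  obtain ⟨hVF, hXF⟩ := KickAux.grad_comp ω Δt g hg hF Z
  obtain ⟨hVG, hXG⟩ := KickAux.grad_comp ω Δt g hg hG Z
  set ψ : Phase Np → Phase Np :=
    fun Z => ((Z.1, fun s => Z.2 s - (Δt * (1 / ω s)) • gradXs g Z.1 s) : Phase Np) with hψdef
  set P : Phase Np := (Z.1, fun s => Z.2 s - (Δt * (1 / ω s)) • gradXs g Z.1 s) with hP
  have hψZ : ψ Z = P := rfl
  set H : Fin Np → Fin 3 → Fin Np → Fin 3 → ℝ := fun s i t j =>
    fderiv ℝ (fderiv ℝ g) Z.1 (Pi.single s (Pi.single i 1)) (Pi.single t (Pi.single j 1))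
    with hH
  set vF := gradV F P with hvF
  set vG := gradV G P with hvG
  set aF := gradX F P with haF
  set aG := gradX G P with haG
  have hXF' : ∀ s i, gradX (F ∘ ψ) Z s i
      = aF s i - ∑ t, ∑ j, Δt * (1 / ω t) * H s i t j * vF t j := hXF
  have hXG' : ∀ s i, gradX (G ∘ ψ) Z s i
      = aG s i - ∑ t, ∑ j, Δt * (1 / ω t) * H s i t j * vG t j := hXG
  rw [pBracket, pBracket, hψZ]
  have hBterm : (∑ s, (1 / ω s) * (B0 (Z.1 s) ⬝ᵥ (gradV (F ∘ ψ) Z s ⨯₃ gradV (G ∘ ψ) Z s)))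
      = ∑ s, (1 / ω s) * (B0 (P.1 s) ⬝ᵥ (vF s ⨯₃ vG s)) := by
    refine Finset.sum_congr rfl fun s _ => ?_
    rw [hVF s, hVG s]
  rw [hBterm]
  congr 1
  have hsymH : ∀ s i t j, H s i t j = H t j s i := fun s i t j =>
    KickAux.symH g hg Z.1 _ _
  have hkey := KickAux.key ω Δt H hsymH vF vG
  calc (∑ s, (1 / ω s) * (gradX (F ∘ ψ) Z s ⬝ᵥ gradV (G ∘ ψ) Z s
          - gradX (G ∘ ψ) Z s ⬝ᵥ gradV (F ∘ ψ) Z s))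
      = ∑ s, ((1 / ω s) * (aF s ⬝ᵥ vG s - aG s ⬝ᵥ vF s)
          - ((1 / ω s) * ∑ i, (∑ t, ∑ j, Δt * (1 / ω t) * H s i t j * vF t j) * vG s i
            - (1 / ω s) * ∑ i, (∑ t, ∑ j, Δt * (1 / ω t) * H s i t j * vG t j) * vF s i)) := by
        refine Finset.sum_congr rfl fun s _ => ?_
        rw [hVF s, hVG s]
        simp only [dotProduct]
        have e1 : (∑ i, gradX (F ∘ ψ) Z s i * vG s i)
            = (∑ i, aF s i * vG s i)
              - ∑ i, (∑ t, ∑ j, Δt * (1 / ω t) * H s i t j * vF t j) * vG s i := by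
          rw [← Finset.sum_sub_distrib]
          refine Finset.sum_congr rfl fun i _ => ?_
          rw [hXF' s i]; ring
        have e2 : (∑ i, gradX (G ∘ ψ) Z s i * vF s i)
            = (∑ i, aG s i * vF s i)
              - ∑ i, (∑ t, ∑ j, Δt * (1 / ω t) * H s i t j * vG t j) * vF s i := by
          rw [← Finset.sum_sub_distrib]
          refine Finset.sum_congr rfl fun i _ => ?_
          rw [hXG' s i]; ring
        rw [e1, e2]
        ring
    _ = (∑ s, (1 / ω s) * (aF s ⬝ᵥ vG s - aG s ⬝ᵥ vF s))
          - ((∑ s, (1 / ω s) * ∑ i, (∑ t, ∑ j, Δt * (1 / ω t) * H s i t j * vF t j) * vG s i)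
            - ∑ s, (1 / ω s) * ∑ i, (∑ t, ∑ j, Δt * (1 / ω t) * H s i t j * vG t j) * vF s i) := by
        rw [Finset.sum_sub_distrib, Finset.sum_sub_distrib]
    _ = ∑ s, (1 / ω s) * (aF s ⬝ᵥ vG s - aG s ⬝ᵥ vF s) := by
        rw [hkey]; ring

end
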